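/- Let φ = (√5 − 1)/2 and let b = (1,0,1,0,1,0,…) be the alternating binary sequence (the binary expansion of 2/3). Then p_{(1,0)}(z) = g_0(g_1(z)) = 2z^2 − z^4, the only roots of 2z^2 − z^4 − z in [0,1] are 0, 1 and φ, and p_{b^{2m}}(φ) = φ for every m ≥ 0; consequently the sequence (p_{b^n}(φ))_{n≥1} converges neither to 0 nor to 1, so the point 2/3 belongs neither to G_φ nor to B_φ. -/

import Mathlib

open Filter Set MeasureTheory

noncomputable section

/-- `g_0(z) = 2z - z²` (bit `false`), `g_1(z) = z²` (bit `true`). -/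
def gBit (c : Bool) (z : ℝ) : ℝ := if c then z ^ 2 else 2 * z - z ^ 2

/-- `pPre b n z = g_{b_n}(g_{b_{n-1}}(⋯ g_{b_1}(z) ⋯))`, where `b_i` is `b (i-1)`. -/
def pPre (b : ℕ → Bool) : ℕ → ℝ → ℝ
  | 0, z => z
  | n + 1, z => gBit (b n) (pPre b n z)

/-- `f(b) = Σ_{n ≥ 1} b_n 2^{-n}`. -/
def fBin (b : ℕ → Bool) : ℝ := ∑' n : ℕ, (if b n then (1 : ℝ) else 0) / 2 ^ (n + 1)

/-- The dyadic rationals in `[0,1]`. -/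
def dyadics : Set ℝ := Set.Icc 0 1 ∩ {x : ℝ | ∃ (p : ℤ) (n : ℕ), x = (p : ℝ) / 2 ^ n}

/-- The good channels of a BEC with erasure probability `ε`: `x ∈ [0,1]` such that some binary
expansion `b` of `x` satisfies `p_{b^n}(ε) → 0`. -/
def Gset (ε : ℝ) : Set ℝ :=
  {x : ℝ | ∃ b : ℕ → Bool, fBin b = x ∧ Tendsto (fun n => pPre b n ε) atTop (nhds 0)}

/-- The bad channels of a BEC with erasure probability `ε`: `x ∈ [0,1]` such that some binary
expansion `b` of `x` satisfies `p_{b^n}(ε) → 1`. -/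
def Bset (ε : ℝ) : Set ℝ :=
  {x : ℝ | ∃ b : ℕ → Bool, fBin b = x ∧ Tendsto (fun n => pPre b n ε) atTop (nhds 1)}

/-- Hamming weight `w(b^n)` of the length-`n` prefix of `b`. -/
def wPre (b : ℕ → Bool) (n : ℕ) : ℕ := ∑ i ∈ Finset.range n, (if b i then 1 else 0)

/-- `b` is `ρ`-heavy: `liminf_{n→∞} (w(b^n) - nρ) ≥ 0` (the liminf computed in `EReal`),
equivalently `liminf 2^{w(b^n)} / 2^{nρ} ≥ 1`. -/
def Heavy (ρ : ℝ) (b : ℕ → Bool) : Prop :=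
  0 ≤ atTop.liminf (fun n : ℕ => (((wPre b n : ℝ) - n * ρ : ℝ) : EReal))

/-- The set of `ρ`-heavy channels. -/
def Hset (ρ : ℝ) : Set ℝ := {x : ℝ | ∃ b : ℕ → Bool, fBin b = x ∧ Heavy ρ b}

lemma summable_fBin (b : ℕ → Bool) :
    Summable fun n => (if b n then (1:ℝ) else 0) / 2 ^ (n + 1) := by
  refine Summable.of_nonneg_of_le (fun n => ?_) (fun n => ?_)
    (summable_geometric_two.mul_left ((1:ℝ)/2))
  · split <;> positivity
  · have h2 : (1:ℝ)/2 * (1/2)^n = 1 / 2^(n+1) := by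
      rw [one_div, inv_pow]; ring
    rw [h2]
    gcongr
    split <;> norm_num

lemma fBin_nonneg (b : ℕ → Bool) : 0 ≤ fBin b :=
  tsum_nonneg fun n => by split <;> positivity

lemma fBin_le_one (b : ℕ → Bool) : fBin b ≤ 1 := by
  have h : fBin b ≤ ∑' n : ℕ, (1:ℝ)/2 * (1/2)^n := by
    refine Summable.tsum_le_tsum (fun n => ?_) (summable_fBin b)
      (summable_geometric_two.mul_left ((1:ℝ)/2))
    have h2 : (1:ℝ)/2 * (1/2)^n = 1 / 2^(n+1) := by rw [one_div, inv_pow]; ring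
    rw [h2]; gcongr; split <;> norm_num
  have : ∑' n : ℕ, (1:ℝ)/2 * (1/2)^n = 1 := by
    rw [tsum_mul_left, tsum_geometric_of_lt_one (by norm_num) (by norm_num)]
    norm_num
  linarith

lemma fBin_shift (b : ℕ → Bool) :
    fBin b = (if b 0 then (1:ℝ) else 0) / 2 + fBin (fun i => b (i + 1)) / 2 := by
  unfold fBin
  rw [Summable.tsum_eq_zero_add (summable_fBin b)]
  have h : ∀ n : ℕ, (if b (n+1) then (1:ℝ) else 0) / 2 ^ (n + 1 + 1)
      = ((if b (n+1) then (1:ℝ) else 0) / 2 ^ (n + 1)) / 2 := by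
    intro n; rw [pow_succ]; ring
  rw [tsum_congr h, tsum_div_const]
  norm_num

lemma step23 (b : ℕ → Bool) (h : fBin b = 2/3) :
    b 0 = true ∧ fBin (fun i => b (i + 1)) = 1/3 := by
  have hs := fBin_shift b
  have h0 := fBin_nonneg (fun i => b (i + 1))
  have h1 := fBin_le_one (fun i => b (i + 1))
  cases hb : b 0 with
  | false => rw [hb] at hs; simp at hs; linarith
  | true => rw [hb] at hs; simp at hs; exact ⟨rfl, by linarith⟩

lemma step13 (b : ℕ → Bool) (h : fBin b = 1/3) :
    b 0 = false ∧ fBin (fun i => b (i + 1)) = 2/3 := by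
  have hs := fBin_shift b
  have h0 := fBin_nonneg (fun i => b (i + 1))
  have h1 := fBin_le_one (fun i => b (i + 1))
  cases hb : b 0 with
  | true => rw [hb] at hs; simp at hs; linarith
  | false => rw [hb] at hs; simp at hs; exact ⟨rfl, by linarith⟩

lemma shift_val (b : ℕ → Bool) (h : fBin b = 2/3) :
    ∀ n, fBin (fun i => b (i + n)) = if n % 2 = 0 then 2/3 else 1/3 := by
  intro n
  induction n with
  | zero => simpa using h
  | succ n ih =>
    have key : (fun i => b (i + 1 + n)) = fun i => b (i + (n + 1)) := by
      funext i; congr 1; omega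
    rcases Nat.mod_two_eq_zero_or_one n with hn | hn
    · rw [hn] at ih; simp only [if_pos rfl] at ih
      have h2 := (step23 _ ih).2
      rw [show (fun i => (fun j => b (j + n)) (i + 1)) = fun i => b (i + (n + 1)) from
        funext fun i => by simp only []; congr 1; omega] at h2
      rw [h2, if_neg (by omega)]
    · rw [hn] at ih; simp only [one_ne_zero, if_false] at ih
      have h2 := (step13 _ ih).2
      rw [show (fun i => (fun j => b (j + n)) (i + 1)) = fun i => b (i + (n + 1)) from
        funext fun i => by simp only []; congr 1; omega] at h2
      rw [h2, if_pos (by omega)]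

lemma unique23 (b : ℕ → Bool) (h : fBin b = 2/3) :
    b = fun i => decide (i % 2 = 0) := by
  funext n
  have hv := shift_val b h n
  rcases Nat.mod_two_eq_zero_or_one n with hn | hn
  · rw [hn, if_pos rfl] at hv
    have := (step23 _ hv).1
    simpa [hn] using this
  · rw [hn, if_neg (by omega)] at hv
    have := (step13 _ hv).1
    simpa [hn] using this

/-- With `φ = (√5 - 1)/2` and `b = (1,0,1,0,…)` the binary expansion of `2/3`:
`p_{(1,0)}(z) = 2z² - z⁴`, the only roots of `2z² - z⁴ - z` in `[0,1]` are `0`, `1`, `φ`,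
`p_{b^{2m}}(φ) = φ` for all `m`, so `p_{b^n}(φ)` converges neither to `0` nor to `1`, and
`2/3` belongs neither to `G_φ` nor to `B_φ`. -/
theorem golden_ratio_fixed_point :
    let φ : ℝ := (Real.sqrt 5 - 1) / 2
    let b : ℕ → Bool := fun i => decide (i % 2 = 0)
    fBin b = 2 / 3 ∧
    (∀ z : ℝ, pPre b 2 z = 2 * z ^ 2 - z ^ 4) ∧
    (∀ z ∈ Set.Icc (0 : ℝ) 1, 2 * z ^ 2 - z ^ 4 - z = 0 ↔ (z = 0 ∨ z = 1 ∨ z = φ)) ∧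
    (∀ m : ℕ, pPre b (2 * m) φ = φ) ∧
    ¬ Tendsto (fun n => pPre b n φ) atTop (nhds 0) ∧
    ¬ Tendsto (fun n => pPre b n φ) atTop (nhds 1) ∧
    (2 / 3 : ℝ) ∉ Gset φ ∧ (2 / 3 : ℝ) ∉ Bset φ := by
  intro φ b
  have h5 : Real.sqrt 5 ^ 2 = 5 := Real.sq_sqrt (by norm_num)
  have h5nn : (0:ℝ) ≤ Real.sqrt 5 := Real.sqrt_nonneg 5
  have hs2 : (2:ℝ) < Real.sqrt 5 := by nlinarith
  have hs3 : Real.sqrt 5 < 3 := by nlinarith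
  have hφdef : φ = (Real.sqrt 5 - 1) / 2 := rfl
  have hφ2 : φ ^ 2 = 1 - φ := by rw [hφdef]; nlinarith
  have hφpos : 0 < φ := by rw [hφdef]; linarith
  have hφlt : φ < 1 := by rw [hφdef]; linarith
  have hb0 : ∀ m : ℕ, b (2 * m) = true := by
    intro m; simp [b, Nat.mul_mod_right]
  have hb1 : ∀ m : ℕ, b (2 * m + 1) = false := by
    intro m; simp [b]
  have hfb : fBin b = 2 / 3 := by
    have hsh1 := fBin_shift b
    have hsh2 := fBin_shift (fun i => b (i + 1))
    have e1 : b 0 = true := hb0 0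
    have e2 : b (0 + 1) = false := hb1 0
    have e3 : (fun i => b (i + 1 + 1)) = b := by
      funext i; simp only [b, decide_eq_decide]; omega
    rw [e1] at hsh1
    rw [e2, e3] at hsh2
    simp at hsh1 hsh2
    linarith
  have hp2 : ∀ z : ℝ, pPre b 2 z = 2 * z ^ 2 - z ^ 4 := by
    intro z
    show gBit (b 1) (gBit (b 0) z) = _
    rw [hb0 0, show b 1 = false from hb1 0]
    simp only [gBit, if_pos, if_neg, Bool.false_eq_true, ite_true, ite_false]
    ring
  have hfix : ∀ m : ℕ, pPre b (2 * m) φ = φ := by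
    intro m
    induction m with
    | zero => rfl
    | succ m ih =>
      have hn : 2 * (m + 1) = (2 * m + 1) + 1 := by ring
      rw [hn]
      show gBit (b (2 * m + 1)) (gBit (b (2 * m)) (pPre b (2 * m) φ)) = φ
      rw [ih, hb0 m, hb1 m]
      simp only [gBit, ite_true, Bool.false_eq_true, ite_false]
      linarith [hφ2, sq_nonneg φ, (by nlinarith : ((φ:ℝ)^2)^2 = (1-φ)^2)]
  have hsub : ∀ L : ℝ, Tendsto (fun n => pPre b n φ) atTop (nhds L) → φ = L := by
    intro L hL
    have hc : Tendsto (fun m : ℕ => 2 * m) atTop atTop :=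
      tendsto_atTop_atTop_of_monotone (fun a c h => by omega) (fun c => ⟨c, by omega⟩)
    have := hL.comp hc
    have heq : ((fun n => pPre b n φ) ∘ fun m : ℕ => 2 * m) = fun _ => φ := by
      funext m; exact hfix m
    rw [heq] at this
    exact tendsto_nhds_unique tendsto_const_nhds this
  have hnot0 : ¬ Tendsto (fun n => pPre b n φ) atTop (nhds 0) := by
    intro h; have := hsub 0 h; linarith
  have hnot1 : ¬ Tendsto (fun n => pPre b n φ) atTop (nhds 1) := by
    intro h; have := hsub 1 h; linarith
  refine ⟨hfb, hp2, ?_, hfix, hnot0, hnot1, ?_, ?_⟩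
  · rintro z ⟨hz0, hz1⟩
    constructor
    · intro h
      have hfac : z * (z - 1) * (z ^ 2 + z - 1) = 0 := by linear_combination -h
      rcases mul_eq_zero.mp hfac with hzz | hq
      · rcases mul_eq_zero.mp hzz with h1 | h1
        · exact Or.inl h1
        · exact Or.inr (Or.inl (by linarith))
      · right; right
        have hfac2 : (z - φ) * (z + 1 + φ) = 0 := by linear_combination hq - hφ2
        rcases mul_eq_zero.mp hfac2 with h1 | h1
        · linarith
        · linarith
    · rintro (rfl | rfl | rfl)
      · ring
      · ring
      · linear_combination (-φ * (φ - 1)) * hφ2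
  · rintro ⟨b', hb', ht⟩
    rw [unique23 b' hb'] at ht
    exact hnot0 ht
  · rintro ⟨b', hb', ht⟩
    rw [unique23 b' hb'] at ht
    exact hnot1 ht
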